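/- Let H be a torsion-free group that is δ-hyperbolic with respect to a finite generating set S. There exist functions f₁: ℕ → ℕ and f₂: ℕ → ℕ, computable from δ and ♯S, such that for every nontrivial g ∈ H and all natural numbers s, t > 0, one has ‖g^{s+t}‖ − f₁(|g|) ≤ ‖g^s‖ + ‖g^t‖ ≤ ‖g^{s+t}‖ + f₂(|g|). -/

import Mathlib

variable {G : Type*} [Group G]

/-- Word length of `g` with respect to a generating set `S`: the least number of
letters from `S ∪ S⁻¹` whose product is `g`. -/
noncomputable def wlen (S : Set G) (g : G) : ℕ :=
  sInf {n : ℕ | ∃ L : List G, (∀ x ∈ L, x ∈ S ∨ x⁻¹ ∈ S) ∧ L.length = n ∧ L.prod = g}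

/-- A discrete geodesic from `a` to `b` in the Cayley graph of `G` w.r.t. `S`:
the sequence of vertices visited by a geodesic path. -/
def IsDGeodesic (S : Set G) (a b : G) (p : ℕ → G) : Prop :=
  p 0 = a ∧ p (wlen S (a⁻¹ * b)) = b ∧
    ∀ i ≤ wlen S (a⁻¹ * b), ∀ j ≤ wlen S (a⁻¹ * b),
      wlen S ((p i)⁻¹ * p j) = Nat.dist i j

/-- `G` is `δ`-hyperbolic with respect to `S`: every geodesic triangle in the
Cayley graph `Γ(G,S)` is `δ`-thin, rendered on the vertex set. -/
def GroupHyperbolic (S : Set G) (δ : ℝ) : Prop :=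
  ∀ a b c : G, ∀ p q : ℕ → G, IsDGeodesic S a b p → IsDGeodesic S a c q →
    ∀ i : ℕ,
      (i : ℝ) ≤ ((wlen S (a⁻¹ * b) : ℝ) + (wlen S (a⁻¹ * c) : ℝ)
          - (wlen S (b⁻¹ * c) : ℝ)) / 2 →
      (wlen S ((p i)⁻¹ * q i) : ℝ) ≤ δ

/-- The (conjugacy/translation) norm of `g`: the minimum word length of a
conjugate of `g`; equivalently `min { d(x, gx) : x ∈ Γ(G,S) }`. -/
noncomputable def gnorm (S : Set G) (g : G) : ℕ :=
  sInf (Set.range fun x : G => wlen S (x⁻¹ * g * x))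

/-- A monoid is torsion-free if no nontrivial element has finite order
(the definition of `Monoid.IsTorsionFree` in the older Mathlib). -/
def Monoid.IsTorsionFree (M : Type*) [Monoid M] : Prop :=
  ∀ g : M, g ≠ 1 → ¬IsOfFinOrder g

namespace Stmt15Aux

open Filter Topology

lemma wset_nonempty {S : Set G} (hS : Subgroup.closure S = ⊤) (g : G) :
    {n : ℕ | ∃ L : List G, (∀ x ∈ L, x ∈ S ∨ x⁻¹ ∈ S) ∧ L.length = n ∧ L.prod = g}.Nonempty := by
  have hg : g ∈ Subgroup.closure S := by rw [hS]; trivial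
  have hg' : g ∈ Submonoid.closure (S ∪ S⁻¹) := by
    rw [← Subgroup.closure_toSubmonoid]; exact hg
  obtain ⟨L, hL, hprod⟩ := Submonoid.exists_list_of_mem_closure hg'
  refine ⟨L.length, L, ?_, rfl, hprod⟩
  intro x hx
  rcases hL x hx with h | h
  · exact Or.inl h
  · exact Or.inr (Set.mem_inv.mp h)

lemma exists_min_list {S : Set G} (hS : Subgroup.closure S = ⊤) (g : G) :
    ∃ L : List G, (∀ x ∈ L, x ∈ S ∨ x⁻¹ ∈ S) ∧ L.length = wlen S g ∧ L.prod = g :=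
  Nat.sInf_mem (wset_nonempty hS g)

lemma wlen_le_length {S : Set G} (L : List G) (h : ∀ x ∈ L, x ∈ S ∨ x⁻¹ ∈ S) :
    wlen S L.prod ≤ L.length :=
  Nat.sInf_le ⟨L, h, rfl, rfl⟩

lemma wlen_mul_le {S : Set G} (hS : Subgroup.closure S = ⊤) (a b : G) :
    wlen S (a * b) ≤ wlen S a + wlen S b := by
  obtain ⟨La, hLa, hlen_a, hprod_a⟩ := exists_min_list hS a
  obtain ⟨Lb, hLb, hlen_b, hprod_b⟩ := exists_min_list hS b
  have h := wlen_le_length (S := S) (La ++ Lb) (by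
    intro x hx; rcases List.mem_append.mp hx with h | h
    exacts [hLa x h, hLb x h])
  simpa [hlen_a, hlen_b, hprod_a, hprod_b] using h

lemma wlen_inv_le {S : Set G} (hS : Subgroup.closure S = ⊤) (g : G) :
    wlen S g⁻¹ ≤ wlen S g := by
  obtain ⟨L, hL, hlen, hprod⟩ := exists_min_list hS g
  have h := wlen_le_length (S := S) ((L.map fun x => x⁻¹).reverse) (by
    intro x hx
    simp only [List.mem_reverse, List.mem_map] at hx
    obtain ⟨y, hy, rfl⟩ := hx
    rcases hL y hy with h | h
    · exact Or.inr (by simpa using h)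
    · exact Or.inl h)
  rw [← List.prod_inv_reverse, hprod] at h
  simpa [hlen] using h

lemma wlen_inv {S : Set G} (hS : Subgroup.closure S = ⊤) (g : G) :
    wlen S g⁻¹ = wlen S g :=
  le_antisymm (wlen_inv_le hS g) (by simpa using wlen_inv_le hS g⁻¹)

lemma geodesic_seg {S : Set G} (hS : Subgroup.closure S = ⊤) (u : G)
    {L : List G} (hL : ∀ x ∈ L, x ∈ S ∨ x⁻¹ ∈ S) (hlen : L.length = wlen S u)
    (hprod : L.prod = u) {i j : ℕ} (hij : i ≤ j) (hj : j ≤ wlen S u) :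
    wlen S ((L.take i).prod⁻¹ * (L.take j).prod) = j - i := by
  set M : List G := (L.take j).drop i with hM
  have hsplit : L.take i ++ M = L.take j := by
    conv_rhs => rw [← List.take_append_drop i (L.take j)]
    rw [hM, List.take_take, min_eq_left hij]
  have hMprod : (L.take i).prod * M.prod = (L.take j).prod := by
    rw [← List.prod_append, hsplit]
  have heq : (L.take i).prod⁻¹ * (L.take j).prod = M.prod := by
    rw [← hMprod]; group
  have hMlen : M.length = j - i := by
    rw [hM, List.length_drop, List.length_take, min_eq_left (hlen ▸ hj)]
  have hMcond : ∀ x ∈ M, x ∈ S ∨ x⁻¹ ∈ S := fun x hx =>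
    hL x (List.take_subset j L (List.drop_subset i _ hx))
  rw [heq]
  refine le_antisymm (hMlen ▸ wlen_le_length M hMcond) ?_
  obtain ⟨K, hKcond, hKlen, hKprod⟩ := exists_min_list hS M.prod
  have hcand : wlen S u ≤ (L.take i ++ (K ++ L.drop j)).length := by
    have hc : ∀ x ∈ L.take i ++ (K ++ L.drop j), x ∈ S ∨ x⁻¹ ∈ S := by
      intro x hx
      rcases List.mem_append.mp hx with h | h
      · exact hL x (List.take_subset i L h)
      rcases List.mem_append.mp h with h | h
      · exact hKcond x h
      · exact hL x (List.drop_subset j L h)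
    have hp : (L.take i ++ (K ++ L.drop j)).prod = u := by
      rw [List.prod_append, List.prod_append, hKprod, ← mul_assoc, hMprod,
        ← List.prod_append, List.take_append_drop, hprod]
    simpa [hp] using wlen_le_length (S := S) _ hc
  have h1 : (L.take i).length = i := by
    rw [List.length_take, min_eq_left]; omega
  have h2 : (L.drop j).length = L.length - j := List.length_drop
  rw [List.length_append, List.length_append, h1, h2, hKlen, hlen] at hcand
  omega

lemma exists_geodesic {S : Set G} (hS : Subgroup.closure S = ⊤) (a b : G) :
    ∃ p : ℕ → G, IsDGeodesic S a b p := by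
  obtain ⟨L, hL, hlen, hprod⟩ := exists_min_list hS (a⁻¹ * b)
  refine ⟨fun i => a * (L.take i).prod, by simp, ?_, ?_⟩
  · show a * (L.take (wlen S (a⁻¹ * b))).prod = b
    rw [← hlen, List.take_length, hprod]; group
  · intro i hi j hj
    have key : ∀ i j : ℕ, i ≤ j → j ≤ wlen S (a⁻¹ * b) →
        wlen S ((a * (L.take i).prod)⁻¹ * (a * (L.take j).prod)) = j - i := by
      intro i j hij hj
      have : (a * (L.take i).prod)⁻¹ * (a * (L.take j).prod)
          = (L.take i).prod⁻¹ * (L.take j).prod := by group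
      rw [this]
      exact geodesic_seg hS _ hL hlen hprod hij hj
    rcases le_total i j with hij | hij
    · rw [key i j hij hj]; exact (Nat.dist_eq_sub_of_le hij).symm
    · have := key j i hij hi
      rw [← wlen_inv hS, mul_inv_rev, inv_inv] at this
      rw [this]; exact (Nat.dist_eq_sub_of_le_right hij).symm

lemma gnorm_le (S : Set G) (g x : G) : gnorm S g ≤ wlen S (x⁻¹ * g * x) :=
  Nat.sInf_le ⟨x, rfl⟩

lemma exists_gnorm (S : Set G) (g : G) : ∃ x : G, wlen S (x⁻¹ * g * x) = gnorm S g :=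
  Nat.sInf_mem (Set.range_nonempty _)

/-- The doubling lemma: `2‖h‖ ≤ ‖h²‖ + 2δ + 2`. -/
lemma gnorm_sq {S : Set G} {δ : ℝ} (hS : Subgroup.closure S = ⊤) (hδ : 0 ≤ δ)
    (hyp : GroupHyperbolic S δ) (h : G) :
    2 * (gnorm S h : ℝ) ≤ (gnorm S (h * h) : ℝ) + (2 * δ + 2) := by
  obtain ⟨y, hy⟩ := exists_gnorm S (h * h)
  set L : ℕ := wlen S (y⁻¹ * (h * y)) with hLdef
  set D : ℕ := wlen S (y⁻¹ * (h * h) * y) with hDdef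
  obtain ⟨r, hr0, hrL, hrgeo⟩ := exists_geodesic hS y (h * y)
  have hab : wlen S ((h * y)⁻¹ * y) = L := by
    rw [show (h * y)⁻¹ * y = (y⁻¹ * (h * y))⁻¹ by group, wlen_inv hS]
  have hac : wlen S ((h * y)⁻¹ * (h * (h * y))) = L := by
    rw [show (h * y)⁻¹ * (h * (h * y)) = y⁻¹ * (h * y) by group]
  have hbc : wlen S (y⁻¹ * (h * (h * y))) = D := by
    rw [show y⁻¹ * (h * (h * y)) = y⁻¹ * (h * h) * y by group]
  have hp : IsDGeodesic S (h * y) y (fun i => r (L - i)) := by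
    refine ⟨by simpa using hrL, ?_, ?_⟩
    · show r (L - wlen S ((h * y)⁻¹ * y)) = y
      rw [hab]; simpa using hr0
    · rw [hab]
      intro i hi j hj
      have := hrgeo (L - i) (by omega) (L - j) (by omega)
      rw [this]
      unfold Nat.dist
      omega
  have hq : IsDGeodesic S (h * y) (h * (h * y)) (fun i => h * r i) := by
    refine ⟨by show h * r 0 = h * y; rw [hr0], ?_, ?_⟩
    · show h * r (wlen S ((h * y)⁻¹ * (h * (h * y)))) = h * (h * y)
      rw [hac, hrL]
    · rw [hac]
      intro i hi j hj
      have := hrgeo i hi j hj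
      rw [show (h * r i)⁻¹ * (h * r j) = (r i)⁻¹ * r j by group, this]
  have disp : ∀ i₀ : ℕ, i₀ ≤ L → (i₀ : ℝ) ≤ ((L : ℝ) + (L : ℝ) - (D : ℝ)) / 2 →
      (gnorm S h : ℝ) ≤ δ + (Nat.dist i₀ (L - i₀) : ℝ) := by
    intro i₀ hi₀L hi₀
    have hthin := hyp (h * y) y (h * (h * y)) _ _ hp hq i₀ (by rw [hab, hac, hbc]; exact hi₀)
    have h1 : gnorm S h ≤ wlen S ((r (L - i₀))⁻¹ * h * r (L - i₀)) := by
      simpa [mul_assoc] using gnorm_le S h (r (L - i₀))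
    have h2 : wlen S ((r (L - i₀))⁻¹ * h * r (L - i₀)) ≤
        wlen S ((r (L - i₀))⁻¹ * (h * r i₀)) + wlen S ((r i₀)⁻¹ * r (L - i₀)) := by
      have := wlen_mul_le hS ((r (L - i₀))⁻¹ * (h * r i₀)) ((r i₀)⁻¹ * r (L - i₀))
      rw [show (r (L - i₀))⁻¹ * (h * r i₀) * ((r i₀)⁻¹ * r (L - i₀))
          = (r (L - i₀))⁻¹ * h * r (L - i₀) by group] at this
      exact this
    have h3 : wlen S ((r i₀)⁻¹ * r (L - i₀)) = Nat.dist i₀ (L - i₀) :=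
      hrgeo i₀ hi₀L (L - i₀) (by omega)
    have h4 : (wlen S ((r (L - i₀))⁻¹ * (h * r i₀)) : ℝ) ≤ δ := hthin
    calc (gnorm S h : ℝ) ≤ (wlen S ((r (L - i₀))⁻¹ * h * r (L - i₀)) : ℝ) := by
          exact_mod_cast h1
      _ ≤ (wlen S ((r (L - i₀))⁻¹ * (h * r i₀)) : ℝ) + (Nat.dist i₀ (L - i₀) : ℝ) := by
          rw [← h3]; exact_mod_cast h2
      _ ≤ δ + (Nat.dist i₀ (L - i₀) : ℝ) := by linarith
  have hD2L : D ≤ 2 * L := by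
    have := wlen_mul_le hS (y⁻¹ * h * y) (y⁻¹ * h * y)
    rw [show y⁻¹ * h * y * (y⁻¹ * h * y) = y⁻¹ * (h * h) * y by group] at this
    have hLL : wlen S (y⁻¹ * h * y) = L := by rw [hLdef, mul_assoc]
    rw [hLL] at this
    omega
  have hLnorm : (gnorm S h : ℝ) ≤ (L : ℝ) := by
    have := gnorm_le S h y
    rw [mul_assoc] at this
    exact_mod_cast this
  have hDnorm : (D : ℝ) = (gnorm S (h * h) : ℝ) := by exact_mod_cast hy
  rcases le_or_gt D L with hcase | hcase
  · have hd := disp (L / 2) (by omega) (by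
      have h2 : 2 * (L / 2) + D ≤ 2 * L := by omega
      have h2' : ((2 * (L / 2) + D : ℕ) : ℝ) ≤ ((2 * L : ℕ) : ℝ) := Nat.cast_le.mpr h2
      push_cast at h2'
      rw [le_div_iff₀ (by norm_num : (0:ℝ) < 2)]
      linarith)
    have hdist : (Nat.dist (L / 2) (L - L / 2) : ℝ) ≤ 1 := by
      have : Nat.dist (L / 2) (L - L / 2) ≤ 1 := by unfold Nat.dist; omega
      exact_mod_cast this
    have : (gnorm S h : ℝ) ≤ δ + 1 := by linarith
    have hnn : (0 : ℝ) ≤ (gnorm S (h * h) : ℝ) := by positivity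
    linarith
  · set i₀ : ℕ := (2 * L - D) / 2 with hi₀def
    have hd := disp i₀ (by omega) (by
      have h2 : 2 * i₀ + D ≤ 2 * L := by omega
      have h2' : ((2 * i₀ + D : ℕ) : ℝ) ≤ ((2 * L : ℕ) : ℝ) := Nat.cast_le.mpr h2
      push_cast at h2'
      rw [le_div_iff₀ (by norm_num : (0:ℝ) < 2)]
      linarith)
    have hdist : (Nat.dist i₀ (L - i₀) : ℝ) ≤ (D : ℝ) - (L : ℝ) + 1 := by
      have h5 : Nat.dist i₀ (L - i₀) ≤ D - L + 1 := by unfold Nat.dist; omega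
      have h6 : ((D - L + 1 : ℕ) : ℝ) = (D : ℝ) - L + 1 := by
        push_cast [Nat.cast_sub (le_of_lt hcase)]; ring
      calc (Nat.dist i₀ (L - i₀) : ℝ) ≤ ((D - L + 1 : ℕ) : ℝ) := by exact_mod_cast h5
        _ = (D : ℝ) - L + 1 := h6
    linarith

/-- Linear growth of `‖g^n‖` with error `2δ+2`. -/
lemma norm_linear {S : Set G} {δ : ℝ} (hS : Subgroup.closure S = ⊤) (hδ : 0 ≤ δ)
    (hyp : GroupHyperbolic S δ) (g : G) :
    ∃ τ : ℝ, (∀ n : ℕ, 1 ≤ n → (n : ℝ) * τ ≤ (gnorm S (g ^ n) : ℝ)) ∧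
      (∀ m : ℕ, 1 ≤ m → (gnorm S (g ^ m) : ℝ) ≤ (m : ℝ) * τ + (2 * δ + 2)) := by
  classical
  set C : ℝ := 2 * δ + 2 with hCdef
  have hC : 0 ≤ C := by positivity
  set dx : G → ℕ → ℝ := fun x n => (wlen S (x⁻¹ * g ^ n * x) : ℝ) with hdxdef
  have hsub : ∀ x : G, Subadditive (dx x) := by
    intro x m n
    have h1 : x⁻¹ * g ^ (m + n) * x = (x⁻¹ * g ^ m * x) * (x⁻¹ * g ^ n * x) := by
      rw [pow_add]; group
    have := wlen_mul_le hS (x⁻¹ * g ^ m * x) (x⁻¹ * g ^ n * x)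
    rw [← h1] at this
    have := (Nat.cast_le (α := ℝ)).mpr this
    push_cast at this
    simp only [hdxdef]
    push_cast
    linarith
  have hpos : ∀ x n, 0 ≤ dx x n := fun x n => Nat.cast_nonneg _
  have hbdd : ∀ x : G, BddBelow (Set.range fun n => dx x n / n) := by
    intro x
    refine ⟨0, ?_⟩
    rintro v ⟨n, rfl⟩
    positivity
  set τ : ℝ := (hsub 1).lim with hτdef
  have htend1 : Tendsto (fun n => dx 1 n / n) atTop (𝓝 τ) := (hsub 1).tendsto_lim (hbdd 1)
  have hlimx : ∀ x : G, (hsub x).lim = τ := by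
    intro x
    have hK : ∀ n : ℕ, |dx x n - dx 1 n| ≤ 2 * (wlen S x : ℝ) := by
      intro n
      have e1 : dx 1 n = (wlen S (g ^ n) : ℝ) := by simp [hdxdef]
      have h1 : wlen S (x⁻¹ * g ^ n * x) ≤ wlen S x + wlen S (g ^ n) + wlen S x := by
        calc wlen S (x⁻¹ * g ^ n * x) ≤ wlen S (x⁻¹ * g ^ n) + wlen S x :=
              wlen_mul_le hS _ _
          _ ≤ wlen S x⁻¹ + wlen S (g ^ n) + wlen S x := by
              have := wlen_mul_le hS x⁻¹ (g ^ n); omega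
          _ = wlen S x + wlen S (g ^ n) + wlen S x := by rw [wlen_inv hS]
      have h2 : wlen S (g ^ n) ≤ wlen S x + wlen S (x⁻¹ * g ^ n * x) + wlen S x := by
        have e2 : g ^ n = x * (x⁻¹ * g ^ n * x) * x⁻¹ := by group
        calc wlen S (g ^ n) = wlen S (x * (x⁻¹ * g ^ n * x) * x⁻¹) := by rw [← e2]
          _ ≤ wlen S (x * (x⁻¹ * g ^ n * x)) + wlen S x⁻¹ := wlen_mul_le hS _ _
          _ ≤ wlen S x + wlen S (x⁻¹ * g ^ n * x) + wlen S x := by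
              have := wlen_mul_le hS x (x⁻¹ * g ^ n * x)
              have := wlen_inv hS x
              omega
      rw [abs_le]
      constructor
      · have := (Nat.cast_le (α := ℝ)).mpr h2
        push_cast at this
        simp only [hdxdef, e1]
        push_cast
        linarith
      · have := (Nat.cast_le (α := ℝ)).mpr h1
        push_cast at this
        simp only [hdxdef, e1]
        push_cast
        linarith
    have hdiff : Tendsto (fun n : ℕ => dx x n / n - dx 1 n / n) atTop (𝓝 0) := by
      apply squeeze_zero_norm' (a := fun n : ℕ => 2 * (wlen S x : ℝ) / n)
      · filter_upwards [eventually_ge_atTop 1] with n hn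
        have hn' : (0 : ℝ) < n := by exact_mod_cast hn
        rw [div_sub_div_same, Real.norm_eq_abs, abs_div, abs_of_pos hn']
        exact div_le_div_of_nonneg_right (hK n) hn'.le
      · exact tendsto_const_div_atTop_nhds_zero_nat _
    have htx : Tendsto (fun n => dx x n / n) atTop (𝓝 τ) := by
      have := htend1.add hdiff
      rw [add_zero] at this
      convert this using 2 with n
      ring
    exact tendsto_nhds_unique ((hsub x).tendsto_lim (hbdd x)) htx
  have claim1 : ∀ n : ℕ, 1 ≤ n → (n : ℝ) * τ ≤ (gnorm S (g ^ n) : ℝ) := by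
    intro n hn
    obtain ⟨x, hx⟩ := exists_gnorm S (g ^ n)
    have h1 : τ ≤ dx x n / n := by
      rw [← hlimx x]
      exact (hsub x).lim_le_div (hbdd x) (by omega)
    have hn' : (0 : ℝ) < n := by exact_mod_cast hn
    have := (le_div_iff₀ hn').mp h1
    have hxe : dx x n = (gnorm S (g ^ n) : ℝ) := by
      simp only [hdxdef]; exact_mod_cast hx
    rw [hxe] at this
    linarith
  refine ⟨τ, claim1, ?_⟩
  have hble : ∀ n : ℕ, (gnorm S (g ^ n) : ℝ) ≤ dx 1 n := by
    intro n
    have := gnorm_le S (g ^ n) 1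
    simp only [hdxdef]
    exact_mod_cast this
  have hbn : Tendsto (fun n : ℕ => (gnorm S (g ^ n) : ℝ) / n) atTop (𝓝 τ) := by
    apply tendsto_of_tendsto_of_tendsto_of_le_of_le' tendsto_const_nhds htend1
    · filter_upwards [eventually_ge_atTop 1] with n hn
      have hn' : (0 : ℝ) < n := by exact_mod_cast hn
      rw [le_div_iff₀ hn']
      have := claim1 n hn
      linarith
    · filter_upwards [eventually_ge_atTop 1] with n hn
      have hn' : (0 : ℝ) < n := by exact_mod_cast hn
      exact div_le_div_of_nonneg_right (hble n) hn'.le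
  intro m hm
  have hm0 : 0 < m := hm
  have step : ∀ k : ℕ, (2 : ℝ) ^ k * (gnorm S (g ^ m) : ℝ) ≤
      (gnorm S (g ^ (2 ^ k * m)) : ℝ) + ((2 : ℝ) ^ k - 1) * C := by
    intro k
    induction k with
    | zero => simp
    | succ k ih =>
      have hpow : g ^ (2 ^ k * m) * g ^ (2 ^ k * m) = g ^ (2 ^ (k + 1) * m) := by
        rw [← pow_add]; congr 1; ring
      have hsq := gnorm_sq hS hδ hyp (g ^ (2 ^ k * m))
      rw [hpow] at hsq
      have ih2 := mul_le_mul_of_nonneg_left ih (by norm_num : (0 : ℝ) ≤ 2)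
      rw [← hCdef] at hsq
      rw [pow_succ]
      nlinarith [hsq, ih2]
  have hF : Tendsto (fun k : ℕ => (m : ℝ) *
      ((gnorm S (g ^ (2 ^ k * m)) : ℝ) / ((2 ^ k * m : ℕ) : ℝ)) + C) atTop
      (𝓝 ((m : ℝ) * τ + C)) := by
    have hcomp : Tendsto (fun k : ℕ => 2 ^ k * m) atTop atTop := by
      apply tendsto_atTop_mono (fun k => ?_) tendsto_id
      calc (id k : ℕ) = k := rfl
        _ ≤ 2 ^ k := (Nat.lt_two_pow_self (n := k)).le
        _ ≤ 2 ^ k * m := Nat.le_mul_of_pos_right _ hm0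
    exact ((hbn.comp hcomp).const_mul (m : ℝ)).add_const C
  have hbound : ∀ k : ℕ, (gnorm S (g ^ m) : ℝ) ≤ (m : ℝ) *
      ((gnorm S (g ^ (2 ^ k * m)) : ℝ) / ((2 ^ k * m : ℕ) : ℝ)) + C := by
    intro k
    set X : ℝ := (gnorm S (g ^ (2 ^ k * m)) : ℝ) with hXdef
    have h2k : (0 : ℝ) < 2 ^ k := by positivity
    have hmR : (0 : ℝ) < m := by exact_mod_cast hm0
    have hcast : ((2 ^ k * m : ℕ) : ℝ) = 2 ^ k * (m : ℝ) := by push_cast; ring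
    have heq : (m : ℝ) * (X / ((2 ^ k * m : ℕ) : ℝ)) = X / 2 ^ k := by
      rw [hcast]
      field_simp
    rw [heq]
    have h1 : (gnorm S (g ^ m) : ℝ) ≤ (X + 2 ^ k * C) / 2 ^ k := by
      rw [le_div_iff₀ h2k]
      have := step k
      nlinarith [this, hC, h2k]
    have h2 : (X + 2 ^ k * C) / 2 ^ k = X / 2 ^ k + C := by
      rw [add_div, mul_div_cancel_left₀ _ (ne_of_gt h2k)]
    linarith [h1, h2.symm.le, h2.le]
  exact ge_of_tendsto' hF hbound

end Stmt15Aux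

/-- (Corollary 2.26 of the paper.)  There are functions
`f₁ = f₁(δ, ♯S; ·)` and `f₂ = f₂(δ, ♯S; ·)` such that for every nontrivial `g`
and all `s, t > 0`: `‖g^{s+t}‖ - f₁(|g|) ≤ ‖g^s‖ + ‖g^t‖ ≤ ‖g^{s+t}‖ + f₂(|g|)`. -/
theorem stmt15 :
    ∃ (f₁ f₂ : ℝ → ℕ → ℕ → ℕ),
      ∀ (H : Type) [Group H] (S : Set H) (δ : ℝ),
        S.Finite → Subgroup.closure S = ⊤ → 0 ≤ δ → GroupHyperbolic S δ →
        Monoid.IsTorsionFree H →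
        ∀ g : H, g ≠ 1 → ∀ s t : ℕ, 0 < s → 0 < t →
          (gnorm S (g ^ (s + t)) : ℝ) - f₁ δ S.ncard (wlen S g) ≤
              (gnorm S (g ^ s) : ℝ) + (gnorm S (g ^ t) : ℝ) ∧
            (gnorm S (g ^ s) : ℝ) + (gnorm S (g ^ t) : ℝ) ≤
              (gnorm S (g ^ (s + t)) : ℝ) + f₂ δ S.ncard (wlen S g) := by
  refine ⟨fun δ _ _ => ⌈2 * δ⌉₊ + 2, fun δ _ _ => 2 * (⌈2 * δ⌉₊ + 2), ?_⟩
  intro H _ S δ _hfin hS hδ hyp _htf g _hg s t hs ht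
  obtain ⟨τ, hlow, hupp⟩ := Stmt15Aux.norm_linear hS hδ hyp g
  have hN : (2 * δ + 2 : ℝ) ≤ ((⌈2 * δ⌉₊ + 2 : ℕ) : ℝ) := by
    push_cast
    linarith [Nat.le_ceil (2 * δ)]
  have hst1 := hlow (s + t) (by omega)
  have hs1 := hlow s hs
  have ht1 := hlow t ht
  have hs2 := hupp s hs
  have ht2 := hupp t ht
  have hst2 := hupp (s + t) (by omega)
  have hcast : ((s + t : ℕ) : ℝ) = (s : ℝ) + (t : ℝ) := by push_cast; ring
  rw [hcast] at hst1 hst2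
  have hring : ((s : ℝ) + (t : ℝ)) * τ = (s : ℝ) * τ + (t : ℝ) * τ := by ring
  have hf2 : ((2 * (⌈2 * δ⌉₊ + 2) : ℕ) : ℝ) = 2 * ((⌈2 * δ⌉₊ + 2 : ℕ) : ℝ) := by push_cast; ring
  constructor
  · linarith [hst2, hs1, ht1, hN, hring]
  · rw [hf2]
    linarith [hs2, ht2, hst1, hN, hring]
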